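/- (Spectral-gap decoupling estimate.) Let Φ be a gapped transfer operator on M_d(ℂ) as below, let H_R be a finite-dimensional Hilbert space, let ρ be any density matrix on ℂ^d ⊗ H_R with marginals ρ^A = tr_R ρ and ρ^R = tr_{ℂ^d} ρ, and let m ≥ 1 be an integer. Then for all operators O_A ∈ M_d(ℂ) and O_R ∈ B(H_R): |tr[(ρ − ρ^A ⊗ ρ^R)(Φ^m(O_A) ⊗ O_R)]| ≤ 2K ‖O_A‖ ‖O_R‖ 2^{−νm}, where ‖·‖ is the operator norm. -/

import Mathlib

open scoped Kronecker ComplexOrder Matrix Classical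

/-- The operator norm of a matrix, i.e. the norm of the induced linear map on Euclidean space. -/
noncomputable def opNorm {n : Type} [Fintype n] [DecidableEq n] (A : Matrix n n ℂ) : ℝ :=
  ‖Matrix.toEuclideanCLM (𝕜 := ℂ) A‖

/-- The positive-semidefinite square root (junk value `0` off the PSD cone). -/
noncomputable def psdSqrt {n : Type} [Fintype n] [DecidableEq n] (A : Matrix n n ℂ) :
    Matrix n n ℂ :=
  if h : A.PosSemidef then
    (h.1.eigenvectorUnitary : Matrix n n ℂ) *
      Matrix.diagonal ((↑) ∘ Real.sqrt ∘ h.1.eigenvalues : n → ℂ) *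
      (star h.1.eigenvectorUnitary : Matrix n n ℂ)
  else 0

/-- The trace norm `‖A‖₁ = tr √(AᴴA)`. -/
noncomputable def traceNorm {n : Type} [Fintype n] [DecidableEq n] (A : Matrix n n ℂ) : ℝ :=
  ((psdSqrt (Aᴴ * A)).trace).re

/-- Fidelity `F(ρ,σ) = tr √(√ρ σ √ρ)`. -/
noncomputable def fidelity {n : Type} [Fintype n] [DecidableEq n] (ρ σ : Matrix n n ℂ) : ℝ :=
  ((psdSqrt (psdSqrt ρ * σ * psdSqrt ρ)).trace).re

/-- Bures distance `𝔅(ρ,σ) = √(2(1 − F(ρ,σ)))`. -/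
noncomputable def bures {n : Type} [Fintype n] [DecidableEq n] (ρ σ : Matrix n n ℂ) : ℝ :=
  Real.sqrt (2 * (1 - fidelity ρ σ))

/-- The rank-one projector `|ψ⟩⟨ψ|`. -/
def outer {n : Type} [Fintype n] (ψ : n → ℂ) : Matrix n n ℂ :=
  Matrix.of fun i j => ψ i * (starRingEnd ℂ) (ψ j)

/-- Complete positivity of a linear map between matrix algebras: for every `k`, the map
`id_{M_k} ⊗ Φ` (acting blockwise) preserves positive semidefiniteness. -/
def IsCompletelyPositive {n m : Type} [Fintype n] [DecidableEq n] [Fintype m] [DecidableEq m]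
    (Φ : Matrix n n ℂ →ₗ[ℂ] Matrix m m ℂ) : Prop :=
  ∀ (k : ℕ) (M : Matrix (Fin k × n) (Fin k × n) ℂ), M.PosSemidef →
    (Matrix.of fun (p q : Fin k × m) =>
      (Φ (Matrix.of fun a b => M (p.1, a) (q.1, b))) p.2 q.2).PosSemidef


open Matrix in
lemma opNorm_nonneg {n : Type} [Fintype n] [DecidableEq n] (A : Matrix n n ℂ) :
    0 ≤ opNorm A := by unfold opNorm; exact norm_nonneg _

noncomputable def toE {n : Type} [Fintype n] (v : n → ℂ) : EuclideanSpace ℂ n :=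
  (WithLp.equiv 2 _).symm v

open Matrix in
lemma opNorm_mul_le' {n : Type} [Fintype n] [DecidableEq n] (A B : Matrix n n ℂ) :
    opNorm (A * B) ≤ opNorm A * opNorm B := by
  unfold opNorm; rw [_root_.map_mul]; exact norm_mul_le _ _

open Matrix in
lemma norm_mulVec_le {n : Type} [Fintype n] [DecidableEq n] (A : Matrix n n ℂ) (v : n → ℂ) :
    ‖toE (A *ᵥ v)‖ ≤ opNorm A * ‖toE v‖ := by
  have h := (Matrix.toEuclideanCLM (𝕜 := ℂ) A).le_opNorm (toE v)
  rwa [show (Matrix.toEuclideanCLM (𝕜 := ℂ) A) (toE v) = toE (A *ᵥ v) by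
    simp [toE, Matrix.toLin'_apply]] at h

open Matrix in
lemma conj_entry {n : Type} [Fintype n] [DecidableEq n] (M U : Matrix n n ℂ) (i : n) :
    (star U * M * U) i i = star (fun a => U a i) ⬝ᵥ (M *ᵥ fun a => U a i) := by
  simp only [Matrix.mul_apply, Matrix.mulVec, dotProduct, Matrix.star_apply,
    Pi.star_apply, Finset.sum_mul]
  rw [Finset.sum_comm]
  refine Finset.sum_congr rfl fun a _ => ?_
  rw [Finset.mul_sum]
  refine Finset.sum_congr rfl fun b _ => ?_
  ring

open Matrix in
lemma star_dot_self' {n : Type} [Fintype n] (v : n → ℂ) :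
    star v ⬝ᵥ v = ((‖toE v‖ : ℝ) : ℂ)^2 := by
  have := inner_self_eq_norm_sq_to_K (𝕜 := ℂ) (toE v)
  simp only [toE] at this
  rwa [WithLp.equiv_symm_apply, EuclideanSpace.inner_toLp_toLp, dotProduct_comm] at this

open Matrix in
lemma abs_trace_mul_le_holder {n : Type} [Fintype n] [DecidableEq n] (A B : Matrix n n ℂ) :
    ‖(A * B).trace‖ ≤ opNorm A * traceNorm B := by
  classical
  have H : (Bᴴ * B).PosSemidef := Matrix.posSemidef_conjTranspose_mul_self B
  set U : Matrix n n ℂ := (H.1.eigenvectorUnitary : Matrix n n ℂ) with hUdef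
  have hU1 : star U * U = 1 := Matrix.mem_unitaryGroup_iff'.mp H.1.eigenvectorUnitary.2
  have hU2 : U * star U = 1 := Matrix.mem_unitaryGroup_iff.mp H.1.eigenvectorUnitary.2
  set lam := H.1.eigenvalues with hlam
  -- trace norm = sum of sqrt of eigenvalues
  have htn : traceNorm B = ∑ i, Real.sqrt (lam i) := by
    rw [traceNorm, psdSqrt, dif_pos H]
    rw [Matrix.trace_mul_cycle]
    rw [show (star (H.1.eigenvectorUnitary : Matrix n n ℂ)) *
      (H.1.eigenvectorUnitary : Matrix n n ℂ) = 1 from hU1, one_mul, Matrix.trace_diagonal]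
    rw [Complex.re_sum]
    simp
    rfl
  -- diagonalization
  have hdiag : star U * (Bᴴ * B) * U = Matrix.diagonal (Complex.ofReal ∘ lam) :=
    by have := H.1.conjStarAlgAut_star_eigenvectorUnitary
       rw [Unitary.conjStarAlgAut_star_apply] at this
       exact this
  -- column vectors
  set v : n → n → ℂ := fun i a => U a i with hv
  have hcol_norm : ∀ i, ‖toE (v i)‖ = 1 := by
    intro i
    have h1 : star (v i) ⬝ᵥ (v i) = 1 := by
      have := conj_entry 1 U i
      rw [mul_one, hU1] at this
      simp only [Matrix.one_apply_eq, Matrix.one_mulVec] at this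
      exact this.symm
    rw [star_dot_self' (v i)] at h1
    have : (‖toE (v i)‖ : ℝ)^2 = 1 := by exact_mod_cast h1
    nlinarith [norm_nonneg (toE (v i))]
  have hBv_norm : ∀ i, ‖toE (B *ᵥ v i)‖ = Real.sqrt (lam i) := by
    intro i
    have h1 : star (B *ᵥ v i) ⬝ᵥ (B *ᵥ v i) = (lam i : ℂ) := by
      rw [Matrix.star_mulVec, ← Matrix.dotProduct_mulVec, Matrix.mulVec_mulVec]
      have := conj_entry (Bᴴ * B) U i
      rw [hdiag] at this
      rw [← this]
      simp [Matrix.diagonal_apply_eq]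
    rw [star_dot_self' (B *ᵥ v i)] at h1
    have h2 : (‖toE (B *ᵥ v i)‖ : ℝ)^2 = lam i := by exact_mod_cast h1
    rw [← h2, Real.sqrt_sq (norm_nonneg _)]
  -- trace as sum over columns
  have htr : (A * B).trace = ∑ i, star (v i) ⬝ᵥ ((A * B) *ᵥ v i) := by
    have : (A * B).trace = (star U * (A * B) * U).trace := by
      rw [Matrix.trace_mul_cycle, ← Matrix.mul_assoc, hU2, one_mul]
    rw [this, Matrix.trace]
    exact Finset.sum_congr rfl fun i _ => conj_entry (A * B) U i
  -- final bound
  rw [htr, htn, Finset.mul_sum]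
  refine le_trans (norm_sum_le _ _) (Finset.sum_le_sum fun i _ => ?_)
  calc ‖star (v i) ⬝ᵥ ((A * B) *ᵥ v i)‖
      ≤ ‖toE (v i)‖ * ‖toE ((A * B) *ᵥ v i)‖ := by
        have := norm_inner_le_norm (𝕜 := ℂ) (toE (v i)) (toE ((A * B) *ᵥ v i))
        simp only [toE] at this
        rwa [WithLp.equiv_symm_apply, EuclideanSpace.inner_toLp_toLp, dotProduct_comm] at this
    _ = ‖toE (A *ᵥ (B *ᵥ v i))‖ := by rw [hcol_norm i, one_mul, ← Matrix.mulVec_mulVec]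
    _ ≤ opNorm A * ‖toE (B *ᵥ v i)‖ := by
        have h := (Matrix.toEuclideanCLM (𝕜 := ℂ) A).le_opNorm (toE (B *ᵥ v i))
        rwa [show (Matrix.toEuclideanCLM (𝕜 := ℂ) A) (toE (B *ᵥ v i)) = toE (A *ᵥ (B *ᵥ v i)) by
          simp [toE, Matrix.toLin'_apply]] at h
    _ = opNorm A * Real.sqrt (lam i) := by rw [hBv_norm i]

open Matrix in
lemma traceNorm_psd {n : Type} [Fintype n] [DecidableEq n] {ρ : Matrix n n ℂ}
    (hρ : ρ.PosSemidef) : traceNorm ρ = ρ.trace.re := by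
  have h : (ρᴴ * ρ).PosSemidef := Matrix.posSemidef_conjTranspose_mul_self ρ
  rw [traceNorm, psdSqrt, dif_pos h]
  have hc := h.1.cfc_eq Real.sqrt
  open scoped MatrixOrder in
  have key : cfc Real.sqrt (ρᴴ * ρ) = ρ := by
    have hsq : ρᴴ * ρ = ρ * ρ := by rw [hρ.1]
    rw [hsq, ← cfcₙ_eq_cfc (hf0 := Real.sqrt_zero), ← CFC.sqrt_eq_real_sqrt (ρ * ρ) (hsq ▸ h).nonneg,
      CFC.sqrt_mul_self ρ hρ.nonneg]
  rw [hc, Matrix.IsHermitian.cfc] at key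
  simp only [Unitary.conjStarAlgAut_apply] at key
  exact congrArg (fun M : Matrix n n ℂ => M.trace.re) key

open Matrix in
lemma abs_trace_mul_psd_le {n : Type} [Fintype n] [DecidableEq n] {ρ : Matrix n n ℂ}
    (hρ : ρ.PosSemidef) (M : Matrix n n ℂ) :
    ‖(ρ * M).trace‖ ≤ opNorm M * ρ.trace.re := by
  rw [Matrix.trace_mul_comm, ← traceNorm_psd hρ]
  exact abs_trace_mul_le_holder M ρ

open Matrix in
lemma norm_toE_sq {n : Type} [Fintype n] (w : n → ℂ) : ‖toE w‖^2 = ∑ i, ‖w i‖^2 := by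
  rw [show toE w = (WithLp.equiv 2 _).symm w from rfl, EuclideanSpace.norm_eq,
    Real.sq_sqrt (Finset.sum_nonneg fun i _ => sq_nonneg _)]
  simp [WithLp.equiv_symm_apply]

open Matrix in
lemma opNorm_kron_one {n E : Type} [Fintype n] [DecidableEq n] [Fintype E] [DecidableEq E]
    (A : Matrix n n ℂ) : opNorm (A ⊗ₖ (1 : Matrix E E ℂ)) ≤ opNorm A := by
  rw [show opNorm (A ⊗ₖ (1 : Matrix E E ℂ)) =
    ‖Matrix.toEuclideanCLM (𝕜 := ℂ) (A ⊗ₖ (1 : Matrix E E ℂ))‖ from rfl]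
  refine ContinuousLinearMap.opNorm_le_bound _ (norm_nonneg _) fun x => ?_
  set v : n × E → ℂ := WithLp.equiv 2 _ x with hv
  have hx : x = toE v := ((WithLp.equiv 2 _).symm_apply_apply x).symm
  have happ : Matrix.toEuclideanCLM (𝕜 := ℂ) (A ⊗ₖ (1 : Matrix E E ℂ)) x
      = toE ((A ⊗ₖ (1 : Matrix E E ℂ)) *ᵥ v) := by
    rw [hx]; simp [toE, Matrix.toLin'_apply]
  rw [happ, hx]
  have key : ∀ p : n × E, ((A ⊗ₖ (1 : Matrix E E ℂ)) *ᵥ v) p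
      = (A *ᵥ fun a' => v (a', p.2)) p.1 := by
    rintro ⟨a, e⟩
    simp only [Matrix.mulVec, dotProduct, Fintype.sum_prod_type,
      Matrix.kroneckerMap_apply, Matrix.one_apply]
    simp [mul_ite, ite_mul, Finset.sum_ite_eq' , mul_comm]
  have hsq : ‖toE ((A ⊗ₖ (1 : Matrix E E ℂ)) *ᵥ v)‖^2 ≤ (opNorm A * ‖toE v‖)^2 := by
    rw [norm_toE_sq]
    have h1 : ∑ p : n × E, ‖((A ⊗ₖ (1 : Matrix E E ℂ)) *ᵥ v) p‖^2
        = ∑ e : E, ‖toE (A *ᵥ fun a' => v (a', e))‖^2 := by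
      rw [Fintype.sum_prod_type]
      rw [Finset.sum_comm]
      refine Finset.sum_congr rfl fun e _ => ?_
      rw [norm_toE_sq]
      exact Finset.sum_congr rfl fun a _ => by rw [key (a, e)]
    rw [h1, mul_pow, norm_toE_sq, Fintype.sum_prod_type, Finset.sum_comm, Finset.mul_sum]
    refine Finset.sum_le_sum fun e _ => ?_
    have hb := norm_mulVec_le A (fun a' => v (a', e))
    calc ‖toE (A *ᵥ fun a' => v (a', e))‖^2
        ≤ (opNorm A * ‖toE (fun a' => v (a', e))‖)^2 := by
          have := norm_nonneg (toE (A *ᵥ fun a' => v (a', e)))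
          nlinarith
      _ = opNorm A^2 * ∑ a, ‖v (a, e)‖^2 := by rw [mul_pow, norm_toE_sq]
  have h2 : (0:ℝ) ≤ opNorm A * ‖toE v‖ := mul_nonneg (norm_nonneg _) (norm_nonneg _)
  nlinarith [norm_nonneg (toE ((A ⊗ₖ (1 : Matrix E E ℂ)) *ᵥ v))]

open Matrix in
lemma opNorm_one_kron {n E : Type} [Fintype n] [DecidableEq n] [Fintype E] [DecidableEq E]
    (B : Matrix E E ℂ) : opNorm ((1 : Matrix n n ℂ) ⊗ₖ B) ≤ opNorm B := by
  rw [show opNorm ((1 : Matrix n n ℂ) ⊗ₖ B) =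
    ‖Matrix.toEuclideanCLM (𝕜 := ℂ) ((1 : Matrix n n ℂ) ⊗ₖ B)‖ from rfl]
  refine ContinuousLinearMap.opNorm_le_bound _ (norm_nonneg _) fun x => ?_
  set v : n × E → ℂ := WithLp.equiv 2 _ x with hv
  have hx : x = toE v := ((WithLp.equiv 2 _).symm_apply_apply x).symm
  have happ : Matrix.toEuclideanCLM (𝕜 := ℂ) ((1 : Matrix n n ℂ) ⊗ₖ B) x
      = toE (((1 : Matrix n n ℂ) ⊗ₖ B) *ᵥ v) := by
    rw [hx]; simp [toE, Matrix.toLin'_apply]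
  rw [happ, hx]
  have key : ∀ p : n × E, (((1 : Matrix n n ℂ) ⊗ₖ B) *ᵥ v) p
      = (B *ᵥ fun e' => v (p.1, e')) p.2 := by
    rintro ⟨a, e⟩
    simp only [Matrix.mulVec, dotProduct, Fintype.sum_prod_type,
      Matrix.kroneckerMap_apply, Matrix.one_apply]
    simp [mul_ite, ite_mul, Finset.sum_ite_eq, mul_comm]
  have hsq : ‖toE (((1 : Matrix n n ℂ) ⊗ₖ B) *ᵥ v)‖^2 ≤ (opNorm B * ‖toE v‖)^2 := by
    rw [norm_toE_sq]
    have h1 : ∑ p : n × E, ‖(((1 : Matrix n n ℂ) ⊗ₖ B) *ᵥ v) p‖^2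
        = ∑ a : n, ‖toE (B *ᵥ fun e' => v (a, e'))‖^2 := by
      rw [Fintype.sum_prod_type]
      refine Finset.sum_congr rfl fun a _ => ?_
      rw [norm_toE_sq]
      exact Finset.sum_congr rfl fun e _ => by rw [key (a, e)]
    rw [h1, mul_pow, norm_toE_sq, Fintype.sum_prod_type, Finset.mul_sum]
    refine Finset.sum_le_sum fun a _ => ?_
    have hb := norm_mulVec_le B (fun e' => v (a, e'))
    calc ‖toE (B *ᵥ fun e' => v (a, e'))‖^2
        ≤ (opNorm B * ‖toE (fun e' => v (a, e'))‖)^2 := by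
          have := norm_nonneg (toE (B *ᵥ fun e' => v (a, e')))
          nlinarith
      _ = opNorm B^2 * ∑ e, ‖v (a, e)‖^2 := by rw [mul_pow, norm_toE_sq]
  have h2 : (0:ℝ) ≤ opNorm B * ‖toE v‖ := mul_nonneg (norm_nonneg _) (norm_nonneg _)
  nlinarith [norm_nonneg (toE (((1 : Matrix n n ℂ) ⊗ₖ B) *ᵥ v))]

open Matrix in
lemma opNorm_kron_le {n E : Type} [Fintype n] [DecidableEq n] [Fintype E] [DecidableEq E]
    (A : Matrix n n ℂ) (B : Matrix E E ℂ) : opNorm (A ⊗ₖ B) ≤ opNorm A * opNorm B := by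
  have h : A ⊗ₖ B = (A ⊗ₖ (1 : Matrix E E ℂ)) * ((1 : Matrix n n ℂ) ⊗ₖ B) := by
    rw [← Matrix.mul_kronecker_mul, mul_one, one_mul]
  rw [h]
  calc opNorm ((A ⊗ₖ (1 : Matrix E E ℂ)) * ((1 : Matrix n n ℂ) ⊗ₖ B))
      ≤ opNorm (A ⊗ₖ (1 : Matrix E E ℂ)) * opNorm ((1 : Matrix n n ℂ) ⊗ₖ B) :=
        opNorm_mul_le' _ _
    _ ≤ opNorm A * opNorm B := by
        have h1 := opNorm_kron_one (E := E) A
        have h2 := opNorm_one_kron (n := n) B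
        have := norm_nonneg (Matrix.toEuclideanCLM (𝕜 := ℂ) (A ⊗ₖ (1 : Matrix E E ℂ)))
        have := norm_nonneg (Matrix.toEuclideanCLM (𝕜 := ℂ) B)
        exact mul_le_mul h1 h2 (norm_nonneg _) (le_trans (norm_nonneg _) h1)

open Matrix in
lemma trace_kron_left {n E : Type} [Fintype n] [DecidableEq n] [Fintype E] [DecidableEq E]
    (ρ : Matrix (n × E) (n × E) ℂ) (M : Matrix n n ℂ) :
    (ρ * (M ⊗ₖ (1 : Matrix E E ℂ))).trace
      = ((Matrix.of fun a a' => ∑ e : E, ρ (a, e) (a', e) : Matrix n n ℂ) * M).trace := by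
  simp only [Matrix.trace, Matrix.diag, Matrix.mul_apply, Matrix.kroneckerMap_apply,
    Matrix.one_apply, Matrix.of_apply, Fintype.sum_prod_type, mul_ite, mul_one, mul_zero,
    Finset.sum_ite_eq', Finset.mem_univ, if_true, Finset.sum_mul]
  exact Finset.sum_congr rfl fun a _ => Finset.sum_comm

open Matrix in
lemma trace_kron_right {n E : Type} [Fintype n] [DecidableEq n] [Fintype E] [DecidableEq E]
    (ρ : Matrix (n × E) (n × E) ℂ) (N : Matrix E E ℂ) :
    (ρ * ((1 : Matrix n n ℂ) ⊗ₖ N)).trace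
      = ((Matrix.of fun e e' => ∑ a : n, ρ (a, e) (a, e') : Matrix E E ℂ) * N).trace := by
  simp only [Matrix.trace, Matrix.diag, Matrix.mul_apply, Matrix.kroneckerMap_apply,
    Matrix.one_apply, Matrix.of_apply, Fintype.sum_prod_type, ite_mul, one_mul, zero_mul,
    mul_ite, mul_zero, Finset.sum_ite_eq', Finset.mem_univ, if_true, Finset.sum_mul]
  have hL : ∀ (a : n) (e : E),
      (∑ x2 : n, ∑ x3 : E, if x2 = a then ρ (a, e) (x2, x3) * N x3 e else 0)
        = ∑ e' : E, ρ (a, e) (a, e') * N e' e := by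
    intro a e
    rw [Finset.sum_comm]
    simp [Finset.sum_ite_eq']
  calc (∑ a : n, ∑ e : E, ∑ x2 : n, ∑ x3 : E, if x2 = a then ρ (a, e) (x2, x3) * N x3 e else 0)
      = ∑ a : n, ∑ e : E, ∑ e' : E, ρ (a, e) (a, e') * N e' e :=
        Finset.sum_congr rfl fun a _ => Finset.sum_congr rfl fun e _ => hL a e
    _ = ∑ e : E, ∑ a : n, ∑ e' : E, ρ (a, e) (a, e') * N e' e := Finset.sum_comm
    _ = ∑ e : E, ∑ e' : E, ∑ a : n, ρ (a, e) (a, e') * N e' e :=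
        Finset.sum_congr rfl fun e _ => Finset.sum_comm


/-- spectral-gap decoupling estimate. For a gapped transfer operator `Φ`
with scaling dimension `ν`, any bipartite density matrix `ρ` on `ℂ^d ⊗ H_R`, and any `m ≥ 1`,
`|tr[(ρ − ρ^A ⊗ ρ^R)(Φ^m(O_A) ⊗ O_R)]| ≤ 2K ‖O_A‖ ‖O_R‖ 2^{−νm}`. -/
theorem gapped_transfer_decoupling
    {d K : ℕ} {E : Type} [Fintype E] [DecidableEq E]
    (ν : ℝ) (hν : 0 < ν)
    (lam : Fin (K + 1) → ℂ) (L R : Fin (K + 1) → Matrix (Fin d) (Fin d) ℂ)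
    (hlam0 : lam 0 = 1) (hL0 : L 0 = 1)
    (hbi : ∀ k l, (L k * R l).trace = if k = l then 1 else 0)
    (hLnorm : ∀ k, opNorm (L k) ≤ 1) (hRnorm : ∀ k, traceNorm (R k) ≤ 1)
    (hgap : ∀ k, k ≠ 0 → ‖lam k‖ ≤ (2 : ℝ) ^ (-ν))
    (Φ : Matrix (Fin d) (Fin d) ℂ → Matrix (Fin d) (Fin d) ℂ)
    (hΦ : ∀ O, Φ O = ∑ k, (lam k * (O * R k).trace) • L k)
    (ρ : Matrix (Fin d × E) (Fin d × E) ℂ) (hρ : ρ.PosSemidef) (hρtr : ρ.trace = 1)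
    (m : ℕ) (hm : 1 ≤ m)
    (OA : Matrix (Fin d) (Fin d) ℂ) (OR : Matrix E E ℂ) :
    -- the marginals `ρ^A = tr_R ρ` and `ρ^R = tr_A ρ`
    let ρA : Matrix (Fin d) (Fin d) ℂ := Matrix.of fun a a' => ∑ e : E, ρ (a, e) (a', e)
    let ρR : Matrix E E ℂ := Matrix.of fun e e' => ∑ a : Fin d, ρ (a, e) (a, e')
    ‖((ρ - ρA ⊗ₖ ρR) * ((Φ^[m] OA) ⊗ₖ OR)).trace‖
      ≤ 2 * K * opNorm OA * opNorm OR * (2 : ℝ) ^ (-(ν * m)) := by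
  intro ρA ρR
  set g : ℝ := (2:ℝ)^(-ν) with hg
  have hg0 : 0 ≤ g := le_of_lt (Real.rpow_pos_of_pos two_pos _)
  have hOA0 : 0 ≤ opNorm OA := opNorm_nonneg OA
  have hOR0 : 0 ≤ opNorm OR := opNorm_nonneg OR
  have hρre : ρ.trace.re = 1 := by rw [hρtr]; simp
  have I1 : ∀ M : Matrix (Fin d) (Fin d) ℂ,
      (ρ * (M ⊗ₖ (1 : Matrix E E ℂ))).trace = (ρA * M).trace := fun M => trace_kron_left ρ M
  have I2 : ∀ N : Matrix E E ℂ,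
      (ρ * ((1 : Matrix (Fin d) (Fin d) ℂ) ⊗ₖ N)).trace = (ρR * N).trace :=
    fun N => trace_kron_right ρ N
  have hρAtr : ρA.trace = 1 := by
    have h := I1 1
    rw [Matrix.mul_one, show (1 : Matrix (Fin d) (Fin d) ℂ) ⊗ₖ (1 : Matrix E E ℂ)
      = (1 : Matrix (Fin d × E) (Fin d × E) ℂ) from Matrix.one_kronecker_one,
      Matrix.mul_one, hρtr] at h
    exact h.symm
  -- iterate formula
  have hiter : ∀ mm, 1 ≤ mm → Φ^[mm] OA = ∑ k, ((lam k)^mm * (OA * R k).trace) • L k := by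
    intro mm hmm
    induction mm, hmm using Nat.le_induction with
    | base =>
      rw [Function.iterate_one, hΦ]
      exact Finset.sum_congr rfl fun k _ => by rw [pow_one]
    | succ p hp ih =>
      rw [Function.iterate_succ_apply', ih, hΦ]
      refine Finset.sum_congr rfl fun l _ => ?_
      have htr : ((∑ k, ((lam k)^p * (OA * R k).trace) • L k) * R l).trace
          = (lam l)^p * (OA * R l).trace := by
        rw [Finset.sum_mul, Matrix.trace_sum]
        rw [Finset.sum_eq_single l]
        · rw [Matrix.smul_mul, Matrix.trace_smul, hbi, if_pos rfl, smul_eq_mul, mul_one]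
        · intro k _ hkl
          rw [Matrix.smul_mul, Matrix.trace_smul, hbi, if_neg hkl, smul_eq_mul, mul_zero]
        · intro h; exact absurd (Finset.mem_univ l) h
      rw [htr, pow_succ]
      congr 1
      ring
  set X := ρ - ρA ⊗ₖ ρR with hX
  -- expansion of the trace
  have hexp : ((X * ((Φ^[m] OA) ⊗ₖ OR)).trace)
      = ∑ k, ((lam k)^m * (OA * R k).trace) * ((X * (L k ⊗ₖ OR)).trace) := by
    rw [hiter m hm]
    have hk : ((∑ k, ((lam k)^m * (OA * R k).trace) • L k) ⊗ₖ OR)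
        = ∑ k, ((lam k)^m * (OA * R k).trace) • (L k ⊗ₖ OR) := by
      ext i j
      simp [Matrix.kroneckerMap_apply, Matrix.sum_apply, Matrix.smul_apply, Finset.sum_mul,
        smul_eq_mul, mul_assoc]
    rw [hk, Matrix.mul_sum, Matrix.trace_sum]
    refine Finset.sum_congr rfl fun k _ => ?_
    rw [Matrix.mul_smul, Matrix.trace_smul, smul_eq_mul]
  -- the k = 0 term vanishes
  have h0 : ((X * (L 0 ⊗ₖ OR)).trace) = 0 := by
    rw [hL0, hX, Matrix.sub_mul, Matrix.trace_sub, I2 OR,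
      show (ρA ⊗ₖ ρR) * ((1 : Matrix (Fin d) (Fin d) ℂ) ⊗ₖ OR) = (ρA * 1) ⊗ₖ (ρR * OR) from
        (Matrix.mul_kronecker_mul _ _ _ _).symm,
      Matrix.mul_one, Matrix.trace_kronecker, hρAtr, one_mul, sub_self]
  -- bound for k ≠ 0
  have hbound : ∀ k, k ≠ 0 →
      ‖((lam k)^m * (OA * R k).trace) * ((X * (L k ⊗ₖ OR)).trace)‖
        ≤ (g^m * opNorm OA) * (2 * opNorm OR) := by
    intro k hk
    have hLk0 : 0 ≤ opNorm (L k) := opNorm_nonneg _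
    have hLk1 : opNorm (L k) ≤ 1 := hLnorm k
    have e1 : ‖(lam k)^m‖ ≤ g^m := by
      rw [norm_pow]
      exact pow_le_pow_left₀ (norm_nonneg _) (hgap k hk) m
    have e2 : ‖(OA * R k).trace‖ ≤ opNorm OA := by
      refine le_trans (abs_trace_mul_le_holder OA (R k)) ?_
      calc opNorm OA * traceNorm (R k) ≤ opNorm OA * 1 :=
            mul_le_mul_of_nonneg_left (hRnorm k) hOA0
        _ = opNorm OA := mul_one _
    have b1 : ‖(ρ * (L k ⊗ₖ OR)).trace‖ ≤ opNorm OR := by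
      refine le_trans (abs_trace_mul_psd_le hρ _) ?_
      rw [hρre, mul_one]
      refine le_trans (opNorm_kron_le (L k) OR) ?_
      calc opNorm (L k) * opNorm OR ≤ 1 * opNorm OR :=
            mul_le_mul_of_nonneg_right hLk1 hOR0
        _ = opNorm OR := one_mul _
    have b2 : ‖((ρA ⊗ₖ ρR) * (L k ⊗ₖ OR)).trace‖ ≤ opNorm OR := by
      rw [show (ρA ⊗ₖ ρR) * ((L k) ⊗ₖ OR) = (ρA * L k) ⊗ₖ (ρR * OR) from
        (Matrix.mul_kronecker_mul _ _ _ _).symm, Matrix.trace_kronecker, norm_mul]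
      have c1 : ‖(ρA * L k).trace‖ ≤ 1 := by
        rw [← I1 (L k)]
        refine le_trans (abs_trace_mul_psd_le hρ _) ?_
        rw [hρre, mul_one]
        refine le_trans (opNorm_kron_le (L k) (1 : Matrix E E ℂ)) ?_
        have h1 : opNorm (1 : Matrix E E ℂ) ≤ 1 := by
          unfold opNorm; rw [_root_.map_one]; exact ContinuousLinearMap.norm_id_le
        calc opNorm (L k) * opNorm (1 : Matrix E E ℂ) ≤ 1 * 1 :=
              mul_le_mul hLk1 h1 (opNorm_nonneg _) zero_le_one
          _ = 1 := one_mul _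
      have c2 : ‖(ρR * OR).trace‖ ≤ opNorm OR := by
        rw [← I2 OR]
        refine le_trans (abs_trace_mul_psd_le hρ _) ?_
        rw [hρre, mul_one]
        refine le_trans (opNorm_kron_le (1 : Matrix (Fin d) (Fin d) ℂ) OR) ?_
        have h1 : opNorm (1 : Matrix (Fin d) (Fin d) ℂ) ≤ 1 := by
          unfold opNorm; rw [_root_.map_one]; exact ContinuousLinearMap.norm_id_le
        calc opNorm (1 : Matrix (Fin d) (Fin d) ℂ) * opNorm OR ≤ 1 * opNorm OR :=
              mul_le_mul_of_nonneg_right h1 hOR0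
          _ = opNorm OR := one_mul _
      calc ‖(ρA * L k).trace‖ * ‖(ρR * OR).trace‖
          ≤ 1 * opNorm OR := mul_le_mul c1 c2 (norm_nonneg _) zero_le_one
        _ = opNorm OR := one_mul _
    have e3 : ‖(X * (L k ⊗ₖ OR)).trace‖ ≤ 2 * opNorm OR := by
      rw [hX, Matrix.sub_mul, Matrix.trace_sub]
      calc ‖(ρ * (L k ⊗ₖ OR)).trace - ((ρA ⊗ₖ ρR) * (L k ⊗ₖ OR)).trace‖
          ≤ ‖(ρ * (L k ⊗ₖ OR)).trace‖
            + ‖((ρA ⊗ₖ ρR) * (L k ⊗ₖ OR)).trace‖ := by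
            exact
              norm_sub_le ((ρ * (L k ⊗ₖ OR)).trace) (((ρA ⊗ₖ ρR) * (L k ⊗ₖ OR)).trace)
        _ ≤ opNorm OR + opNorm OR := add_le_add b1 b2
        _ = 2 * opNorm OR := by ring
    rw [norm_mul]
    refine mul_le_mul ?_ e3 (norm_nonneg _)
      (mul_nonneg (pow_nonneg hg0 m) hOA0)
    rw [norm_mul]
    exact mul_le_mul e1 e2 (norm_nonneg _) (pow_nonneg hg0 m)
  -- assemble
  rw [hexp, ← Finset.sum_erase_add Finset.univ _ (Finset.mem_univ (0 : Fin (K+1))),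
    h0, mul_zero, add_zero]
  refine le_trans (norm_sum_le _ _) ?_
  refine le_trans (Finset.sum_le_sum fun k hk => hbound k (Finset.ne_of_mem_erase hk)) ?_
  rw [Finset.sum_const, Finset.card_erase_of_mem (Finset.mem_univ _), Finset.card_univ,
    Fintype.card_fin, Nat.add_sub_cancel, nsmul_eq_mul]
  have hpow : (2:ℝ) ^ (-(ν * (m:ℕ))) = g ^ m := by
    rw [show -(ν * ((m:ℕ):ℝ)) = (-ν) * ((m:ℕ):ℝ) by ring,
      Real.rpow_mul (by norm_num : (0:ℝ) ≤ 2), Real.rpow_natCast]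
  rw [hpow]
  exact le_of_eq (by ring)
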